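/- Let H be a real Hilbert space with a continuous symmetric bilinear form a(·,·) that is coercive on the kernel Z of a bounded bilinear form b : H × M → ℝ (M a Hilbert space), where b satisfies the inf-sup condition: there is β > 0 with sup_{x ∈ H, x ≠ 0} b(x, m)/‖x‖_H ≥ β‖m‖_M for all m ∈ M. Then for every pair of bounded linear functionals f ∈ H', g ∈ M' the saddle point problem a(u, v) + b(v, p) = f(v) for all v ∈ H, b(u, q) = g(q) for all q ∈ M, admits a unique solution (u, p) ∈ H × M, and ‖u‖_H + ‖p‖_M ≤ C(‖f‖_{H'} + ‖g‖_{M'}) with C depending only on the continuity constants, the coercivity constant, and β. -/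

import Mathlib

open RealInnerProductSpace InnerProductSpace ContinuousLinearMap

private lemma brezzi_div_trick {c t K : ℝ} (hc : 0 < c) (hK : 0 ≤ K)
    (h : c * t * t ≤ K * t) (ht : 0 ≤ t) : c * t ≤ K := by
  rcases eq_or_lt_of_le ht with h0 | h0
  · rw [← h0]; simpa using hK
  · exact le_of_mul_le_mul_right h h0

set_option maxHeartbeats 1000000 in
/-- Brezzi's theorem for saddle point problems: continuity of a and b,
coercivity of a on the kernel of b, and the inf-sup condition for b imply
unique solvability of the saddle point problem with a stability constant
depending only on the continuity constants, the coercivity constant and β. -/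
theorem stmt7 (H M : Type*)
    [NormedAddCommGroup H] [InnerProductSpace ℝ H] [CompleteSpace H]
    [NormedAddCommGroup M] [InnerProductSpace ℝ M] [CompleteSpace M]
    (a : H →ₗ[ℝ] H →ₗ[ℝ] ℝ) (b : H →ₗ[ℝ] M →ₗ[ℝ] ℝ)
    (Ca Cb α β : ℝ) (hCa : 0 < Ca) (hCb : 0 < Cb) (hα : 0 < α) (hβ : 0 < β)
    (ha_bdd : ∀ x y, |a x y| ≤ Ca * ‖x‖ * ‖y‖)
    (ha_symm : ∀ x y, a x y = a y x)
    (hb_bdd : ∀ x m, |b x m| ≤ Cb * ‖x‖ * ‖m‖)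
    (ha_coer : ∀ x : H, (∀ m, b x m = 0) → α * ‖x‖ ^ 2 ≤ a x x)
    (hb_infsup : ∀ m : M, β * ‖m‖ ≤ ⨆ x : {x : H // x ≠ 0}, b x.1 m / ‖x.1‖) :
    ∃ C : ℝ, 0 < C ∧ ∀ (f : H →L[ℝ] ℝ) (g : M →L[ℝ] ℝ),
      (∃! up : H × M, (∀ v, a up.1 v + b v up.2 = f v) ∧ (∀ q, b up.1 q = g q)) ∧
      (∀ (u : H) (p : M), (∀ v, a u v + b v p = f v) → (∀ q, b u q = g q) →
        ‖u‖ + ‖p‖ ≤ C * (‖f‖ + ‖g‖)) := by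
  -- continuous bilinear forms
  let a' : H →L[ℝ] H →L[ℝ] ℝ := LinearMap.mkContinuous₂ a Ca (by
    intro x y; simpa [Real.norm_eq_abs] using ha_bdd x y)
  have ha' : ∀ x y, a' x y = a x y := fun x y => rfl
  have ha'norm : ∀ x : H, ‖a' x‖ ≤ Ca * ‖x‖ := by
    intro x
    refine ContinuousLinearMap.opNorm_le_bound _ (by positivity) fun y => ?_
    simpa [Real.norm_eq_abs, ha'] using ha_bdd x y
  let b' : H →L[ℝ] M →L[ℝ] ℝ := LinearMap.mkContinuous₂ b Cb (by
    intro x m; simpa [Real.norm_eq_abs] using hb_bdd x m)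
  -- the operator B and its adjoint
  let B : H →L[ℝ] M :=
    ((InnerProductSpace.toDual ℝ M).symm.toContinuousLinearEquiv.toContinuousLinearMap).comp b'
  have hB : ∀ x m, ⟪B x, m⟫_ℝ = b x m := by
    intro x m
    have h1 : B x = (InnerProductSpace.toDual ℝ M).symm (b' x) := rfl
    rw [h1, InnerProductSpace.toDual_symm_apply]; rfl
  let Bs : M →L[ℝ] H := ContinuousLinearMap.adjoint B
  have hBs : ∀ x m, ⟪x, Bs m⟫_ℝ = b x m := by
    intro x m
    rw [show Bs m = ContinuousLinearMap.adjoint B m from rfl,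
      ContinuousLinearMap.adjoint_inner_right]
    exact hB x m
  -- inf-sup gives a lower bound on the adjoint
  have hlow : ∀ m : M, β * ‖m‖ ≤ ‖Bs m‖ := by
    intro m
    refine (hb_infsup m).trans (Real.iSup_le ?_ (norm_nonneg _))
    rintro ⟨x, hx⟩
    rw [div_le_iff₀ (norm_pos_iff.mpr hx)]
    calc b x m = ⟪x, Bs m⟫_ℝ := (hBs x m).symm
      _ ≤ ‖x‖ * ‖Bs m‖ := real_inner_le_norm x (Bs m)
      _ = ‖Bs m‖ * ‖x‖ := mul_comm _ _
  -- the coercive operator B B*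
  let T : M →L[ℝ] M →L[ℝ] ℝ := (innerSL ℝ).bilinearComp Bs Bs
  have hT : ∀ m n, T m n = ⟪Bs m, Bs n⟫_ℝ := fun m n => rfl
  have hTcoer : IsCoercive T := by
    refine ⟨β ^ 2, by positivity, fun m => ?_⟩
    have h1 := hlow m
    have h2 : (β * ‖m‖) * (β * ‖m‖) ≤ ‖Bs m‖ * ‖Bs m‖ :=
      mul_le_mul h1 h1 (by positivity) (norm_nonneg _)
    calc β ^ 2 * ‖m‖ * ‖m‖ = (β * ‖m‖) * (β * ‖m‖) := by ring
      _ ≤ ‖Bs m‖ * ‖Bs m‖ := h2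
      _ = ⟪Bs m, Bs m⟫_ℝ := (real_inner_self_eq_norm_mul_norm _).symm
      _ = T m m := (hT m m).symm
  let e := hTcoer.continuousLinearEquivOfBilin
  have he : ∀ m n, ⟪e m, n⟫_ℝ = T m n := fun m n =>
    hTcoer.continuousLinearEquivOfBilin_apply m n
  have heB : ∀ m, e m = B (Bs m) := by
    intro m
    refine ext_inner_right ℝ fun n => ?_
    rw [he m n, hT m n]
    exact ContinuousLinearMap.adjoint_inner_right B (Bs m) n
  -- the kernel of B
  set Z : Submodule ℝ H := LinearMap.ker (B : H →ₗ[ℝ] M) with hZdef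
  haveI : CompleteSpace Z := (isClosed_ker B).completeSpace_coe
  have hZb : ∀ z : Z, ∀ m, b (z : H) m = 0 := by
    intro z m
    rw [← hB]
    have : B (z : H) = 0 := z.2
    rw [this, inner_zero_left]
  -- the bilinear form a restricted to Z, Lax-Milgram there
  let aZ : Z →L[ℝ] Z →L[ℝ] ℝ := a'.bilinearComp Z.subtypeL Z.subtypeL
  have haZ : ∀ z v : Z, aZ z v = a (z : H) (v : H) := fun z v => rfl
  have haZcoer : IsCoercive aZ := by
    refine ⟨α, hα, fun z => ?_⟩
    have h1 := ha_coer (z : H) (hZb z)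
    have h2 : ‖z‖ = ‖(z : H)‖ := rfl
    rw [haZ, h2]
    calc α * ‖(z : H)‖ * ‖(z : H)‖ = α * ‖(z : H)‖ ^ 2 := by ring
      _ ≤ a (z : H) (z : H) := h1
  let eZ := haZcoer.continuousLinearEquivOfBilin
  have heZ : ∀ z v : Z, ⟪eZ z, v⟫_ℝ = aZ z v := fun z v =>
    haZcoer.continuousLinearEquivOfBilin_apply z v
  -- the constant
  set C1 : ℝ := 1 / α + (Ca / α + 1) / β with hC1
  set C2 : ℝ := (1 + Ca * C1) / β with hC2
  have hC1pos : 0 < C1 := by rw [hC1]; positivity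
  have hC2pos : 0 < C2 := by rw [hC2]; positivity
  refine ⟨C1 + C2, by positivity, ?_⟩
  intro f g
  -- Step 1: u_g := Bs m_g with B u_g = riesz g
  set y : M := (InnerProductSpace.toDual ℝ M).symm g with hy
  have hyg : ∀ q, ⟪y, q⟫_ℝ = g q := fun q => InnerProductSpace.toDual_symm_apply
  have hynorm : ‖y‖ = ‖g‖ := LinearIsometryEquiv.norm_map _ g
  set mg : M := e.symm y with hmg
  have hemg : e mg = y := e.apply_symm_apply y
  set ug : H := Bs mg with hug
  have hBug : B ug = y := by rw [hug, ← heB, hemg]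
  have hugnorm : β * ‖ug‖ ≤ ‖g‖ := by
    have h1 : ‖ug‖ * ‖ug‖ = ⟪y, mg⟫_ℝ := by
      rw [← real_inner_self_eq_norm_mul_norm, hug, ← hT, ← he, hemg]
    have h2 : ⟪y, mg⟫_ℝ ≤ ‖y‖ * ‖mg‖ := real_inner_le_norm y mg
    have h3 : β * ‖mg‖ ≤ ‖ug‖ := hlow mg
    rw [← hynorm]
    refine brezzi_div_trick hβ (norm_nonneg y) ?_ (norm_nonneg ug)
    calc β * ‖ug‖ * ‖ug‖ = β * (‖ug‖ * ‖ug‖) := by ring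
      _ = β * ⟪y, mg⟫_ℝ := by rw [h1]
      _ ≤ β * (‖y‖ * ‖mg‖) := by
          refine mul_le_mul_of_nonneg_left h2 hβ.le
      _ = ‖y‖ * (β * ‖mg‖) := by ring
      _ ≤ ‖y‖ * ‖ug‖ := mul_le_mul_of_nonneg_left h3 (norm_nonneg y)
  -- Step 2: solve on the kernel
  set F1 : H →L[ℝ] ℝ := f - a' ug with hF1
  set l1 : Z →L[ℝ] ℝ := F1.comp Z.subtypeL with hl1
  set z0 : Z := eZ.symm ((InnerProductSpace.toDual ℝ Z).symm l1) with hz0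
  have hz0eq : ∀ v : Z, a (z0 : H) (v : H) = f (v : H) - a ug (v : H) := by
    intro v
    have h1 : ⟪eZ z0, v⟫_ℝ = aZ z0 v := heZ z0 v
    rw [hz0] at h1
    rw [eZ.apply_symm_apply] at h1
    rw [InnerProductSpace.toDual_symm_apply] at h1
    have h2 : l1 v = f (v : H) - a ug (v : H) := rfl
    rw [h2] at h1
    rw [← haZ]
    exact h1.symm
  have hz0norm : α * ‖(z0 : H)‖ ≤ ‖f‖ + Ca * ‖ug‖ := by
    have hcoe : ‖z0‖ = ‖(z0 : H)‖ := rfl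
    refine brezzi_div_trick hα (by positivity) ?_ (norm_nonneg _)
    have h1 : α * ‖(z0 : H)‖ * ‖(z0 : H)‖ ≤ a (z0 : H) (z0 : H) := by
      have := ha_coer (z0 : H) (hZb z0)
      calc α * ‖(z0 : H)‖ * ‖(z0 : H)‖ = α * ‖(z0 : H)‖ ^ 2 := by ring
        _ ≤ a (z0 : H) (z0 : H) := this
    have h2 := hz0eq z0
    have h3 : f (z0 : H) ≤ ‖f‖ * ‖(z0 : H)‖ := by
      have := f.le_opNorm (z0 : H)
      have h3a : f (z0 : H) ≤ ‖f (z0 : H)‖ := le_abs_self _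
      linarith
    have h4 : -a ug (z0 : H) ≤ Ca * ‖ug‖ * ‖(z0 : H)‖ := by
      have := ha_bdd ug (z0 : H)
      have := neg_abs_le (a ug (z0 : H))
      linarith
    have hexp : (‖f‖ + Ca * ‖ug‖) * ‖(z0 : H)‖ = ‖f‖ * ‖(z0 : H)‖ + Ca * ‖ug‖ * ‖(z0 : H)‖ := by
      ring
    linarith
  -- the first component of the solution
  set u : H := (z0 : H) + ug with hu
  have hEq2 : ∀ q, b u q = g q := by
    intro q
    rw [← hB, hu, map_add]
    have h1 : B (z0 : H) = 0 := z0.2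
    rw [h1, hBug, zero_add]
    exact hyg q
  have hunorm : ‖u‖ ≤ C1 * (‖f‖ + ‖g‖) := by
    have h0 : ‖u‖ ≤ ‖(z0 : H)‖ + ‖ug‖ := norm_add_le _ _
    have h1 : ‖(z0 : H)‖ ≤ (‖f‖ + Ca * ‖ug‖) / α := by
      rw [le_div_iff₀ hα]; linarith [hz0norm]
    have h2 : ‖ug‖ ≤ ‖g‖ / β := by
      rw [le_div_iff₀ hβ]; linarith [hugnorm]
    have h3 : (0:ℝ) ≤ Ca / α := by positivity
    have h4 := mul_le_mul_of_nonneg_left h2 h3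
    have h5 : (0:ℝ) ≤ ‖g‖ / α := by positivity
    have h6 : (0:ℝ) ≤ (Ca / α + 1) / β * ‖f‖ := by positivity
    rw [hC1]
    have hexp : (‖f‖ + Ca * ‖ug‖) / α = ‖f‖ / α + (Ca / α) * ‖ug‖ := by ring
    rw [hexp] at h1
    have : ‖u‖ ≤ ‖f‖ / α + (Ca / α) * (‖g‖ / β) + ‖g‖ / β := by linarith
    have hdiff : (1 / α + (Ca / α + 1) / β) * (‖f‖ + ‖g‖) =
        ‖f‖ / α + (Ca / α) * (‖g‖ / β) + ‖g‖ / β + (‖g‖ / α + (Ca / α + 1) / β * ‖f‖) := by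
      ring
    linarith
  -- Step 3: find p
  set F2 : H →L[ℝ] ℝ := f - a' u with hF2
  set w : H := (InnerProductSpace.toDual ℝ H).symm F2 with hw
  have hwv : ∀ v, ⟪w, v⟫_ℝ = f v - a u v := fun v => InnerProductSpace.toDual_symm_apply
  have hwnorm : ‖w‖ = ‖F2‖ := LinearIsometryEquiv.norm_map _ F2
  set p : M := e.symm (B w) with hp
  have hBsp : Bs p = w := by
    have h1 : B (Bs p) = B w := by rw [← heB, hp, e.apply_symm_apply]
    have hker : Bs p - w ∈ Z := by
      rw [hZdef, LinearMap.mem_ker, map_sub, ContinuousLinearMap.coe_coe, h1, sub_self]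
    have horth : ∀ z : Z, ⟪Bs p - w, (z : H)⟫_ℝ = 0 := by
      intro z
      rw [inner_sub_left]
      have h2 : ⟪Bs p, (z : H)⟫_ℝ = 0 := by
        rw [real_inner_comm, hBs]
        exact hZb z p
      have h3 : ⟪w, (z : H)⟫_ℝ = 0 := by
        rw [hwv]
        have h4 : a u (z : H) = f (z : H) := by
          have h5 := hz0eq z
          have h6 : a u (z : H) = a (z0 : H) (z : H) + a ug (z : H) := by
            rw [hu, map_add, LinearMap.add_apply]
          rw [h6, h5]; ring
        rw [h4]; ring
      rw [h2, h3]; ring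
    have hd : (⟪Bs p - w, Bs p - w⟫_ℝ) = 0 := horth ⟨Bs p - w, hker⟩
    have hd0 : Bs p - w = 0 := by rwa [inner_self_eq_zero] at hd
    exact sub_eq_zero.mp hd0
  have hEq1 : ∀ v, a u v + b v p = f v := by
    intro v
    have h1 : b v p = f v - a u v := by
      rw [← hBs v p, hBsp, real_inner_comm w v]
      exact hwv v
    linarith
  have hpnorm : β * ‖p‖ ≤ ‖f‖ + Ca * ‖u‖ := by
    have h1 := hlow p
    rw [hBsp, hwnorm] at h1
    have h2 : ‖F2‖ ≤ ‖f‖ + Ca * ‖u‖ := by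
      rw [hF2]
      have h3 : ‖f - a' u‖ ≤ ‖f‖ + ‖a' u‖ := norm_sub_le _ _
      have h4 := ha'norm u
      linarith
    linarith
  have hpnorm2 : ‖p‖ ≤ C2 * (‖f‖ + ‖g‖) := by
    have h2 : Ca * ‖u‖ ≤ Ca * (C1 * (‖f‖ + ‖g‖)) := mul_le_mul_of_nonneg_left hunorm hCa.le
    have key : ‖f‖ + Ca * ‖u‖ ≤ (1 + Ca * C1) * (‖f‖ + ‖g‖) := by
      have hexpand : (1 + Ca * C1) * (‖f‖ + ‖g‖) = (‖f‖ + ‖g‖) + Ca * (C1 * (‖f‖ + ‖g‖)) := by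
        ring
      have h3 : (0:ℝ) ≤ ‖g‖ := norm_nonneg _
      linarith
    have h4 : β * ‖p‖ ≤ (1 + Ca * C1) * (‖f‖ + ‖g‖) := le_trans hpnorm key
    rw [hC2, div_mul_eq_mul_div, le_div_iff₀ hβ]
    linarith
  have hbound : ‖u‖ + ‖p‖ ≤ (C1 + C2) * (‖f‖ + ‖g‖) := by
    have hexpand : (C1 + C2) * (‖f‖ + ‖g‖) = C1 * (‖f‖ + ‖g‖) + C2 * (‖f‖ + ‖g‖) := by ring
    linarith
  -- uniqueness
  have huniq : ∀ u' p', (∀ v, a u' v + b v p' = f v) → (∀ q, b u' q = g q) →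
      u' = u ∧ p' = p := by
    intro u' p' h1 h2
    have hd1 : ∀ v, a (u' - u) v + b v (p' - p) = 0 := by
      intro v
      have e1 := h1 v
      have e2 := hEq1 v
      have ea : a (u' - u) v = a u' v - a u v := by
        rw [map_sub a u' u, LinearMap.sub_apply]
      have eb : b v (p' - p) = b v p' - b v p := map_sub (b v) p' p
      rw [ea, eb]; linarith
    have hd2 : ∀ q, b (u' - u) q = 0 := by
      intro q
      have h3 : b (u' - u) = b u' - b u := map_sub b u' u
      rw [h3, LinearMap.sub_apply, h2 q, hEq2 q, sub_self]
    have haduu : a (u' - u) (u' - u) = 0 := by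
      have h3 := hd1 (u' - u)
      have hb0 : b (u' - u) (p' - p) = 0 := hd2 (p' - p)
      linarith
    have hdu0 : u' - u = 0 := by
      have hc := ha_coer (u' - u) hd2
      rw [haduu] at hc
      have ht : ‖u' - u‖ ^ 2 ≤ 0 := by nlinarith [hc]
      have ht2 : ‖u' - u‖ ^ 2 = 0 := le_antisymm ht (sq_nonneg _)
      have ht3 : ‖u' - u‖ * ‖u' - u‖ = 0 := by
        have := ht2
        rw [sq] at this
        exact this
      have hn : ‖u' - u‖ = 0 := mul_self_eq_zero.mp ht3
      exact norm_eq_zero.mp hn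
    have hbp : ∀ v, b v (p' - p) = 0 := by
      intro v
      have h3 := hd1 v
      rw [hdu0] at h3
      simpa using h3
    have hp0 : p' - p = 0 := by
      have h1' := hb_infsup (p' - p)
      have h2' : (⨆ x : {x : H // x ≠ 0}, b x.1 (p' - p) / ‖x.1‖) ≤ 0 :=
        Real.iSup_le (fun x => by rw [hbp x.1]; simp) le_rfl
      have h3' : β * ‖p' - p‖ ≤ 0 := le_trans h1' h2'
      have hle : ‖p' - p‖ ≤ 0 := by nlinarith [h3', norm_nonneg (p' - p)]
      have hn : ‖p' - p‖ = 0 := le_antisymm hle (norm_nonneg _)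
      exact norm_eq_zero.mp hn
    exact ⟨sub_eq_zero.mp hdu0, sub_eq_zero.mp hp0⟩
  refine ⟨⟨(u, p), ⟨hEq1, hEq2⟩, ?_⟩, ?_⟩
  · rintro ⟨u', p'⟩ ⟨h1, h2⟩
    obtain ⟨e1, e2⟩ := huniq u' p' h1 h2
    simp only [Prod.mk.injEq]
    exact ⟨e1, e2⟩
  · intro u' p' h1 h2
    obtain ⟨e1, e2⟩ := huniq u' p' h1 h2
    rw [e1, e2]
    exact hbound
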